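/- Let T > 0, ε ∈ (0,1), and let ũ : [-1,1] → ℝ be a C¹ function with ũ(x) ∈ [1-ε, 1+ε] for x < -ε and ũ(x) ∈ [-1-ε, -1+ε] for x > ε. Then the L¹ norm of the Burgers residual f(ũ)_x with f(u) = u²/2 over (0,T) × (-ε, ε) is at least T(1-ε)². -/

import Mathlib

open intervalIntegral Topology Filter

/-- L¹ lower bound `T(1-ε)²` for the Burgers residual of a
time-independent smoothed standing-shock profile over `(0,T) × (-ε,ε)`. -/
theorem stmt_0 (T ε : ℝ) (hT : 0 < T) (hε : ε ∈ Set.Ioo (0:ℝ) 1)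
    (u : ℝ → ℝ) (hu : ContDiff ℝ 1 u)
    (hleft : ∀ x ∈ Set.Icc (-1:ℝ) 1, x < -ε → u x ∈ Set.Icc (1 - ε) (1 + ε))
    (hright : ∀ x ∈ Set.Icc (-1:ℝ) 1, ε < x → u x ∈ Set.Icc (-1 - ε) (-1 + ε)) :
    T * (1 - ε)^2 ≤
      ∫ _t in (0:ℝ)..T, ∫ x in (-ε)..ε, |deriv (fun y => (u y)^2 / 2) x| := by
  obtain ⟨hε0, hε1⟩ := hε
  set g : ℝ → ℝ := fun y => (u y)^2 / 2 with hg_def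
  have hg : ContDiff ℝ 1 g := (hu.pow 2).div_const 2
  have hgc : Continuous (deriv g) := (hg.iterate_deriv' 0 1).continuous
  have hgd : Differentiable ℝ g := hg.differentiable one_ne_zero
  -- endpoint bounds
  have hleft' : 1 - ε ≤ u (-ε) := by
    haveI : (𝓝[Set.Ioo (-1:ℝ) (-ε)] (-ε)).NeBot := by
      apply right_nhdsWithin_Ioo_neBot
      linarith
    have ht : Filter.Tendsto u (𝓝[Set.Ioo (-1:ℝ) (-ε)] (-ε)) (𝓝 (u (-ε))) :=
      (hu.continuous.tendsto _).mono_left nhdsWithin_le_nhds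
    refine ge_of_tendsto ht (Filter.eventually_of_mem self_mem_nhdsWithin fun x hx => ?_)
    exact (hleft x ⟨hx.1.le, by linarith [hx.2]⟩ hx.2).1
  have hright' : u ε ≤ -(1 - ε) := by
    haveI : (𝓝[Set.Ioo ε (1:ℝ)] ε).NeBot := by
      apply left_nhdsWithin_Ioo_neBot
      linarith
    have ht : Filter.Tendsto u (𝓝[Set.Ioo ε (1:ℝ)] ε) (𝓝 (u ε)) :=
      (hu.continuous.tendsto _).mono_left nhdsWithin_le_nhds
    have : u ε ≤ -1 + ε := by
      refine le_of_tendsto ht (Filter.eventually_of_mem self_mem_nhdsWithin fun x hx => ?_)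
      exact (hright x ⟨by linarith [hx.1], hx.2.le⟩ hx.1).2
    linarith
  -- zero crossing
  obtain ⟨c, hcmem, hc⟩ : ∃ c ∈ Set.Icc (-ε) ε, u c = 0 := by
    have hsub := intermediate_value_Icc' (by linarith : (-ε) ≤ ε) hu.continuous.continuousOn
    have h0 : (0:ℝ) ∈ Set.Icc (u ε) (u (-ε)) := ⟨by linarith, by linarith⟩
    obtain ⟨x, hx, hux⟩ := hsub h0
    exact ⟨x, hx, hux⟩
  have hii : ∀ a b : ℝ, IntervalIntegrable (fun x => |deriv g x|) MeasureTheory.volume a b :=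
    fun a b => (hgc.abs).intervalIntegrable a b
  have hftc : ∀ a b : ℝ, ∫ x in a..b, deriv g x = g b - g a := fun a b =>
    integral_deriv_eq_sub (fun x _ => hgd x) (hgc.intervalIntegrable a b)
  have hgc0 : g c = 0 := by simp [hg_def, hc]
  have hgl : (1 - ε)^2 / 2 ≤ g (-ε) := by
    have : (1 - ε)^2 ≤ (u (-ε))^2 := by nlinarith
    simp only [hg_def]; linarith
  have hgr : (1 - ε)^2 / 2 ≤ g ε := by
    have : (1 - ε)^2 ≤ (u ε)^2 := by nlinarith
    simp only [hg_def]; linarith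
  have key : (1 - ε)^2 ≤ ∫ x in (-ε)..ε, |deriv g x| := by
    have hsplit : ∫ x in (-ε)..ε, |deriv g x| =
        (∫ x in (-ε)..c, |deriv g x|) + ∫ x in c..ε, |deriv g x| :=
      (integral_add_adjacent_intervals (hii _ _) (hii _ _)).symm
    have h1 : (1 - ε)^2 / 2 ≤ ∫ x in (-ε)..c, |deriv g x| := by
      have := intervalIntegral.abs_integral_le_integral_abs (f := deriv g) (μ := MeasureTheory.volume) hcmem.1
      rw [hftc] at this
      calc (1 - ε)^2 / 2 ≤ |g c - g (-ε)| := by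
              rw [hgc0, abs_sub_comm, sub_zero]
              exact le_trans hgl (le_abs_self _)
        _ ≤ _ := this
    have h2 : (1 - ε)^2 / 2 ≤ ∫ x in c..ε, |deriv g x| := by
      have := intervalIntegral.abs_integral_le_integral_abs (f := deriv g) (μ := MeasureTheory.volume) hcmem.2
      rw [hftc] at this
      calc (1 - ε)^2 / 2 ≤ |g ε - g c| := by
              rw [hgc0, sub_zero]
              exact le_trans hgr (le_abs_self _)
        _ ≤ _ := this
    rw [hsplit]; linarith
  rw [intervalIntegral.integral_const]
  simp only [sub_zero, smul_eq_mul]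
  exact mul_le_mul_of_nonneg_left key hT.le
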